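/- The map F : S^n → V* defined by ⟨F(x), g⟩ = ∫₀¹ h_x(t) g(t) dt, where h_x is the step function taking value sign(xᵢ) on the interval of length xᵢ² determined by x = (x₀,…,xₙ) ∈ S^n, is continuous and odd, i.e., F(−x) = −F(x) for all x ∈ S^n. -/
import Mathlib


open MeasureTheory

/-- The pairing `⟨F(x), g⟩ = ∫₀¹ h_x g`, where `h_x` is the step function taking the
value `sign (xᵢ)` on the `i`-th consecutive interval of length `xᵢ²` of `[0,1]`. -/
noncomputable def hobbyRicePairing (n : ℕ) (x : Fin (n + 1) → ℝ) (g : ℝ → ℝ) : ℝ :=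
  ∑ i : Fin (n + 1), Real.sign (x i) *
    ∫ s in (∑ j ∈ Finset.Iio i, x j ^ 2)..(∑ j ∈ Finset.Iic i, x j ^ 2), g s

theorem hobbyRice_aux_mem (n : ℕ) (x : Fin (n + 1) → ℝ) (hx : ∑ i, x i ^ 2 = 1)
    (s : Finset (Fin (n + 1))) : (∑ j ∈ s, x j ^ 2) ∈ Set.Icc (0 : ℝ) 1 := by
  constructor
  · exact Finset.sum_nonneg fun j _ => sq_nonneg _
  · rw [← hx]
    exact Finset.sum_le_sum_of_subset_of_nonneg (Finset.subset_univ s)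
      (fun j _ _ => sq_nonneg _)

theorem hobbyRice_aux_sign_cwa {n : ℕ} {i : Fin (n + 1)}
    {S : Set (Fin (n + 1) → ℝ)} {x : Fin (n + 1) → ℝ} (hxi : x i ≠ 0) :
    ContinuousWithinAt (fun y : Fin (n + 1) → ℝ => Real.sign (y i)) S x := by
  apply ContinuousWithinAt.congr_of_eventuallyEq
    (f := fun _ => Real.sign (x i)) continuousWithinAt_const
  · rcases hxi.lt_or_gt with h | h
    · have hopen : IsOpen {y : Fin (n + 1) → ℝ | y i < 0} :=
        isOpen_lt (continuous_apply i) continuous_const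
      filter_upwards [nhdsWithin_le_nhds (hopen.mem_nhds h)] with y hy
      rw [Real.sign_of_neg hy, Real.sign_of_neg h]
    · have hopen : IsOpen {y : Fin (n + 1) → ℝ | 0 < y i} :=
        isOpen_lt continuous_const (continuous_apply i)
      filter_upwards [nhdsWithin_le_nhds (hopen.mem_nhds h)] with y hy
      rw [Real.sign_of_pos hy, Real.sign_of_pos h]
  · rfl

theorem hobbyRice_aux_term_cont (n : ℕ) (i : Fin (n + 1)) (Φ : ℝ → ℝ)
    (hΦc : ContinuousOn Φ (Set.Icc (0 : ℝ) 1)) :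
    ContinuousOn (fun x : Fin (n + 1) → ℝ => Real.sign (x i) *
      (Φ (∑ j ∈ Finset.Iic i, x j ^ 2) - Φ (∑ j ∈ Finset.Iio i, x j ^ 2)))
      {x : Fin (n + 1) → ℝ | ∑ i, x i ^ 2 = 1} := by
  set S : Set (Fin (n + 1) → ℝ) := {x | ∑ i, x i ^ 2 = 1} with hS
  have hBc : Continuous (fun x : Fin (n + 1) → ℝ => ∑ j ∈ Finset.Iic i, x j ^ 2) :=
    continuous_finset_sum _ fun j _ => (continuous_apply j).pow 2
  have hAc : Continuous (fun x : Fin (n + 1) → ℝ => ∑ j ∈ Finset.Iio i, x j ^ 2) :=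
    continuous_finset_sum _ fun j _ => (continuous_apply j).pow 2
  have hdiff : ∀ x ∈ S, ContinuousWithinAt
      (fun y : Fin (n + 1) → ℝ =>
        Φ (∑ j ∈ Finset.Iic i, y j ^ 2) - Φ (∑ j ∈ Finset.Iio i, y j ^ 2)) S x := by
    intro x hx
    have h1 : ContinuousWithinAt
        (fun y : Fin (n + 1) → ℝ => Φ (∑ j ∈ Finset.Iic i, y j ^ 2)) S x :=
      ContinuousWithinAt.comp (hΦc _ (hobbyRice_aux_mem n x hx _))
        hBc.continuousWithinAt (fun y hy => hobbyRice_aux_mem n y hy _)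
    have h2 : ContinuousWithinAt
        (fun y : Fin (n + 1) → ℝ => Φ (∑ j ∈ Finset.Iio i, y j ^ 2)) S x :=
      ContinuousWithinAt.comp (hΦc _ (hobbyRice_aux_mem n x hx _))
        hAc.continuousWithinAt (fun y hy => hobbyRice_aux_mem n y hy _)
    exact h1.sub h2
  intro x hx
  by_cases hxi : x i = 0
  · -- squeeze to 0
    have hval : Real.sign (x i) *
        (Φ (∑ j ∈ Finset.Iic i, x j ^ 2) - Φ (∑ j ∈ Finset.Iio i, x j ^ 2)) = 0 := by
      rw [hxi, Real.sign_zero, zero_mul]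
    rw [ContinuousWithinAt, hval]
    have hBA : (∑ j ∈ Finset.Iic i, x j ^ 2) - (∑ j ∈ Finset.Iio i, x j ^ 2)
        = x i ^ 2 := by
      rw [← Finset.sum_sdiff_eq_sub (Finset.Iio_subset_Iic_self)]
      have he : Finset.Iic i \ Finset.Iio i = {i} := by
        ext j
        simp only [Finset.mem_sdiff, Finset.mem_Iic, Finset.mem_Iio,
          Finset.mem_singleton]
        constructor
        · rintro ⟨h1, h2⟩; exact le_antisymm h1 (not_lt.mp h2)
        · rintro rfl; exact ⟨le_refl _, lt_irrefl _⟩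
      rw [he, Finset.sum_singleton]
    have hBAx : (∑ j ∈ Finset.Iic i, x j ^ 2) = ∑ j ∈ Finset.Iio i, x j ^ 2 := by
      rw [hxi] at hBA; nlinarith [hBA]
    have htend : Filter.Tendsto
        (fun y : Fin (n + 1) → ℝ =>
          Φ (∑ j ∈ Finset.Iic i, y j ^ 2) - Φ (∑ j ∈ Finset.Iio i, y j ^ 2))
        (nhdsWithin x S) (nhds 0) := by
      have h := hdiff x hx
      rw [ContinuousWithinAt] at h
      simpa [hBAx] using h
    apply squeeze_zero_norm
      (a := fun y : Fin (n + 1) → ℝ =>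
        |Φ (∑ j ∈ Finset.Iic i, y j ^ 2) - Φ (∑ j ∈ Finset.Iio i, y j ^ 2)|)
    · intro y
      rw [Real.norm_eq_abs, abs_mul]
      calc |Real.sign (y i)| *
            |Φ (∑ j ∈ Finset.Iic i, y j ^ 2) - Φ (∑ j ∈ Finset.Iio i, y j ^ 2)|
          ≤ 1 * |Φ (∑ j ∈ Finset.Iic i, y j ^ 2) - Φ (∑ j ∈ Finset.Iio i, y j ^ 2)| := by
            apply mul_le_mul_of_nonneg_right _ (abs_nonneg _)
            rcases lt_trichotomy (y i) 0 with h | h | h <;>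
              simp [Real.sign_of_neg, Real.sign_of_pos, h]
        _ = _ := one_mul _
    · simpa using htend.abs
  · exact (hobbyRice_aux_sign_cwa hxi).mul (hdiff x hx)

/-- The map `F : Sⁿ → V*`, `⟨F(x), g⟩ = ∫₀¹ h_x(t) g(t) dt` (with `h_x` the step function
with value `sign xᵢ` on the interval of length `xᵢ²`), is continuous on the sphere and
odd: for every integrable `g`, `x ↦ ⟨F(x), g⟩` is continuous on `{Σ xᵢ² = 1}`, and
`⟨F(-x), g⟩ = -⟨F(x), g⟩`. -/
theorem hobbyRicePairing_continuous_odd (n : ℕ) :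
    (∀ g : ℝ → ℝ, IntegrableOn g (Set.Icc (0 : ℝ) 1) →
      ContinuousOn (fun x => hobbyRicePairing n x g)
        {x : Fin (n + 1) → ℝ | ∑ i, x i ^ 2 = 1}) ∧
    (∀ x : Fin (n + 1) → ℝ, (∑ i, x i ^ 2) = 1 → ∀ g : ℝ → ℝ,
      hobbyRicePairing n (-x) g = -hobbyRicePairing n x g) := by
  constructor
  · intro g hg
    have hΦc : ContinuousOn (fun u => ∫ t in (0 : ℝ)..u, g t) (Set.Icc (0 : ℝ) 1) := by
      have h01 : Set.uIcc (0 : ℝ) 1 = Set.Icc 0 1 := Set.uIcc_of_le zero_le_one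
      have h := intervalIntegral.continuousOn_primitive_interval (a := (0 : ℝ)) (b := 1)
          (f := g) (μ := volume) (by rwa [h01])
      rwa [h01] at h
    have hint : ∀ u ∈ Set.Icc (0 : ℝ) 1, ∀ v ∈ Set.Icc (0 : ℝ) 1,
        IntervalIntegrable g volume u v := by
      intro u hu v hv
      apply (hg.mono_set ?_).intervalIntegrable
      rw [← Set.uIcc_of_le (zero_le_one (α := ℝ))]
      exact Set.uIcc_subset_uIcc (by rwa [Set.uIcc_of_le zero_le_one])
        (by rwa [Set.uIcc_of_le zero_le_one])
    have key : ∀ x ∈ {x : Fin (n + 1) → ℝ | ∑ i, x i ^ 2 = 1},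
        hobbyRicePairing n x g =
        ∑ i : Fin (n + 1), Real.sign (x i) *
          ((∫ t in (0 : ℝ)..(∑ j ∈ Finset.Iic i, x j ^ 2), g t)
            - ∫ t in (0 : ℝ)..(∑ j ∈ Finset.Iio i, x j ^ 2), g t) := by
      intro x hx
      unfold hobbyRicePairing
      refine Finset.sum_congr rfl fun i _ => ?_
      congr 1
      have h1 : IntervalIntegrable g volume 0 (∑ j ∈ Finset.Iic i, x j ^ 2) :=
        hint 0 (Set.left_mem_Icc.2 zero_le_one) _ (hobbyRice_aux_mem n x hx _)
      have h2 : IntervalIntegrable g volume 0 (∑ j ∈ Finset.Iio i, x j ^ 2) :=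
        hint 0 (Set.left_mem_Icc.2 zero_le_one) _ (hobbyRice_aux_mem n x hx _)
      rw [intervalIntegral.integral_interval_sub_left h1 h2]
    refine ContinuousOn.congr ?_ key
    exact continuousOn_finset_sum (f := fun (i : Fin (n + 1)) (x : Fin (n + 1) → ℝ) =>
        Real.sign (x i) *
          ((∫ t in (0 : ℝ)..(∑ j ∈ Finset.Iic i, x j ^ 2), g t)
            - ∫ t in (0 : ℝ)..(∑ j ∈ Finset.Iio i, x j ^ 2), g t))
      Finset.univ (fun i _ =>
        hobbyRice_aux_term_cont n i (fun u => ∫ t in (0 : ℝ)..u, g t) hΦc)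
  · intro x hx g
    unfold hobbyRicePairing
    rw [← Finset.sum_neg_distrib]
    refine Finset.sum_congr rfl fun i _ => ?_
    simp only [Pi.neg_apply, neg_sq, Real.sign_neg, neg_mul]
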